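/- arXiv:2212.07565 — 2 statements merged into one kernel-verified Lean document; each statement's English description precedes it below -/
import Mathlib

section
/- Let G be a compact subgroup of the group of invertible linear maps on ℝⁿ. Let B ⊆ ℝⁿ satisfy ΛB = B for all Λ ∈ G, let f : ℝⁿ → ℝⁿ be such that f(Λx) = Λ f(x) for all x ∈ B and Λ ∈ G, and let Φ : ℝⁿ → ℝ satisfy Φ(Λx) = Φ(x) for all x ∈ B and Λ ∈ G. If there exist a continuously differentiable V : ℝⁿ → ℝ and U ∈ ℝ such that U − Φ(x) − f(x)·∇V(x) ≥ 0 for all x ∈ B, then there exists a continuously differentiable V̂ : ℝⁿ → ℝ with V̂(Λx) = V̂(x) for all x ∈ ℝⁿ and Λ ∈ G such that U − Φ(x) − f(x)·∇V̂(x) ≥ 0 for all x ∈ B. -/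
open scoped RealInnerProductSpace
open MeasureTheory Topology

theorem symmetrize_aux {E : Type} [NormedAddCommGroup E] [InnerProductSpace ℝ E]
    [FiniteDimensional ℝ E]
    (G : Subgroup (E ≃L[ℝ] E))
    (hGcomp : IsCompact ((fun Λ : E ≃L[ℝ] E => (Λ : E →L[ℝ] E)) '' (G : Set _)))
    (B : Set E)
    (hB : ∀ Λ ∈ G, (Λ : E ≃L[ℝ] E) '' B = B)
    (f : E → E)
    (hf : ∀ Λ ∈ G, ∀ x ∈ B, f ((Λ : E ≃L[ℝ] E) x) = Λ (f x))
    (Φ : E → ℝ)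
    (hΦ : ∀ Λ ∈ G, ∀ x ∈ B, Φ ((Λ : E ≃L[ℝ] E) x) = Φ x)
    (V : E → ℝ) (hV : ContDiff ℝ 1 V) (U : ℝ)
    (hineq : ∀ x ∈ B, 0 ≤ U - Φ x - ⟪f x, gradient V x⟫) :
    ∃ Vh : E → ℝ, ContDiff ℝ 1 Vh ∧
      (∀ Λ ∈ G, ∀ x : E, Vh ((Λ : E ≃L[ℝ] E) x) = Vh x) ∧
      ∀ x ∈ B, 0 ≤ U - Φ x - ⟪f x, gradient Vh x⟫ := by
  classical
  set A := E →L[ℝ] E with hA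
  let e : Aˣ ≃* (E ≃L[ℝ] E) := ContinuousLinearEquiv.unitsEquiv ℝ E
  let H : Subgroup Aˣ := G.comap e.toMonoidHom
  -- the value map is an embedding
  have emb : Topology.IsEmbedding (fun u : H => ((u : Aˣ) : A)) :=
    Units.isOpenEmbedding_val.isEmbedding.comp Topology.IsEmbedding.subtypeVal
  -- coe of e
  have hval : ∀ u : Aˣ, ((e u : E ≃L[ℝ] E) : A) = (u : A) := fun u => rfl
  -- range identification
  have hrange : Set.range (fun u : H => ((u : Aˣ) : A))
      = ((fun Λ : E ≃L[ℝ] E => (Λ : E →L[ℝ] E)) '' (G : Set _)) := by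
    ext a
    constructor
    · rintro ⟨u, rfl⟩
      exact ⟨e u, u.2, hval u⟩
    · rintro ⟨Λ, hΛ, rfl⟩
      refine ⟨⟨e.symm Λ, ?_⟩, ?_⟩
      · simpa [H, Subgroup.mem_comap] using hΛ
      · show ((e.symm Λ : Aˣ) : A) = _
        rw [← hval (e.symm Λ), e.apply_symm_apply]
  haveI : T2Space H := emb.t2Space
  haveI : SecondCountableTopology H := emb.secondCountableTopology
  haveI : CompactSpace H := by
    rw [← isCompact_univ_iff, emb.isCompact_iff, Set.image_univ, hrange]
    exact hGcomp
  letI : MeasurableSpace H := borel H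
  haveI : BorelSpace H := ⟨rfl⟩
  let K₀ : TopologicalSpace.PositiveCompacts H :=
    ⟨⟨Set.univ, isCompact_univ⟩, by simp [interior_univ]⟩
  let μ : Measure H := Measure.haarMeasure K₀
  haveI : IsProbabilityMeasure μ :=
    ⟨Measure.haarMeasure_self (K₀ := K₀)⟩
  -- the action map
  let j : H → A := fun u => (((u : Aˣ)⁻¹ : Aˣ) : A)
  have hjcont : Continuous j :=
    Units.continuous_val.comp (continuous_inv.comp continuous_subtype_val)
  -- the group element corresponding to `j u`
  let gL : H → (E ≃L[ℝ] E) := fun u => e ((u : Aˣ)⁻¹)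
  have hgLmem : ∀ u : H, gL u ∈ G := by
    intro u
    have : e ((u : Aˣ)⁻¹) = (e (u : Aˣ))⁻¹ := map_inv e _
    show e ((u : Aˣ)⁻¹) ∈ G
    rw [this]
    exact G.inv_mem u.2
  have hj : ∀ (u : H) (x : E), j u x = gL u x := fun u x => rfl
  -- membership of j u in the compact set
  have hjmem : ∀ u : H, j u ∈ Set.range (fun u : H => ((u : Aˣ) : A)) :=
    fun u => ⟨⟨(u : Aˣ)⁻¹, H.inv_mem u.2⟩, rfl⟩
  obtain ⟨M, hM⟩ : ∃ M : ℝ, ∀ u : H, ‖j u‖ ≤ M := by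
    obtain ⟨M, hM⟩ := (hGcomp.image continuous_norm).bddAbove
    refine ⟨M, fun u => hM ?_⟩
    have := hjmem u
    rw [hrange] at this
    obtain ⟨Λ, hΛ, hh⟩ := this
    exact ⟨(Λ : A), ⟨Λ, hΛ, rfl⟩, by rw [← hh]⟩
  have hM0 : 0 ≤ M := le_trans (norm_nonneg _) (hM 1)
  -- integrability of continuous functions on the compact group
  have key : ∀ {W : Type} [NormedAddCommGroup W] (φ : ↥H → W),
      Continuous φ → Integrable φ μ := by
    intro W _ φ hφ
    obtain ⟨C, hC⟩ := (isCompact_univ.image hφ.norm).bddAbove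
    refine (integrable_const C).mono' hφ.aestronglyMeasurable
      (Filter.Eventually.of_forall fun u => hC ⟨u, trivial, rfl⟩)
  have hdiffV : Differentiable ℝ V := hV.differentiable one_ne_zero
  have hfdcont : Continuous (fderiv ℝ V) := hV.continuous_fderiv one_ne_zero
  -- evaluation continuity
  have hev : Continuous fun p : E × H => j p.2 p.1 :=
    isBoundedBilinearMap_apply.continuous.comp
      ((hjcont.comp continuous_snd).prodMk continuous_fst)
  -- the derivative integrand
  let F' : E → ↥H → (E →L[ℝ] ℝ) := fun x u => (fderiv ℝ V (j u x)).comp (j u)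
  have hF'c : Continuous fun p : E × ↥H => F' p.1 p.2 :=
    isBoundedBilinearMap_comp.continuous.comp
      ((hfdcont.comp hev).prodMk (hjcont.comp continuous_snd))
  -- compactness of the range
  have hKc : IsCompact (Set.range fun u : ↥H => ((u : Aˣ) : A)) := by
    rw [hrange]; exact hGcomp
  let Vh : E → ℝ := fun x => ∫ u, V (j u x) ∂μ
  have hjx : ∀ x : E, Continuous fun u : ↥H => j u x := fun x =>
    hev.comp (continuous_const.prodMk continuous_id)
  have hjVx : ∀ x : E, Continuous fun u : ↥H => V (j u x) := fun x =>
    hV.continuous.comp (hjx x)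
  have hF'x : ∀ x : E, Continuous fun u : ↥H => F' x u := fun x =>
    hF'c.comp (Continuous.prodMk_right x)
  -- uniform bound near a point
  have hbound : ∀ x₀ : E, ∃ C : ℝ, ∀ u : ↥H, ∀ x ∈ Metric.ball x₀ 1, ‖F' x u‖ ≤ C := by
    intro x₀
    have hT : IsCompact ((fun p : A × E => p.1 p.2) ''
        ((Set.range fun u : ↥H => ((u : Aˣ) : A)) ×ˢ Metric.closedBall x₀ 1)) :=
      (hKc.prod (isCompact_closedBall _ _)).image isBoundedBilinearMap_apply.continuous
    obtain ⟨C₁, hC₁⟩ := (hT.image (continuous_norm.comp hfdcont)).bddAbove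
    refine ⟨(max C₁ 0) * M, fun u x hx => ?_⟩
    have hmemT : j u x ∈ (fun p : A × E => p.1 p.2) ''
        ((Set.range fun u : ↥H => ((u : Aˣ) : A)) ×ˢ Metric.closedBall x₀ 1) :=
      ⟨(j u, x), ⟨hjmem u, Metric.ball_subset_closedBall hx⟩, rfl⟩
    have h1 : ‖fderiv ℝ V (j u x)‖ ≤ max C₁ 0 :=
      le_trans (hC₁ ⟨j u x, hmemT, rfl⟩) (le_max_left _ _)
    calc ‖F' x u‖ ≤ ‖fderiv ℝ V (j u x)‖ * ‖j u‖ := ContinuousLinearMap.opNorm_comp_le _ _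
    _ ≤ (max C₁ 0) * M := mul_le_mul h1 (hM u) (norm_nonneg _) (le_max_right _ _)
  -- differentiability
  have hVhderiv : ∀ x₀ : E, HasFDerivAt Vh (∫ u, F' x₀ u ∂μ) x₀ := by
    intro x₀
    obtain ⟨C, hC⟩ := hbound x₀
    exact hasFDerivAt_integral_of_dominated_of_fderiv_le (Metric.ball_mem_nhds x₀ one_pos)
      (Filter.Eventually.of_forall fun x => (hjVx x).aestronglyMeasurable)
      (key _ (hjVx x₀))
      ((hF'x x₀).aestronglyMeasurable)
      (Filter.Eventually.of_forall fun u x hx => hC u x hx)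
      (integrable_const C)
      (Filter.Eventually.of_forall fun u x _ =>
        (hdiffV (j u x)).hasFDerivAt.comp x (j u).hasFDerivAt)
  -- continuity of the derivative
  have hgcont : Continuous fun x : E => ∫ u, F' x u ∂μ := by
    rw [continuous_iff_continuousAt]
    intro x₀
    obtain ⟨C, hC⟩ := hbound x₀
    refine tendsto_integral_filter_of_dominated_convergence (fun _ => C)
      (Filter.Eventually.of_forall fun x => (hF'x x).aestronglyMeasurable)
      (Filter.eventually_of_mem (Metric.ball_mem_nhds x₀ one_pos) fun x hx =>
        Filter.Eventually.of_forall fun u => hC u x hx)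
      (integrable_const C)
      (Filter.Eventually.of_forall fun u =>
        ((hF'c.comp (continuous_id.prodMk continuous_const)).tendsto x₀))
  have hVhfderiv : (fderiv ℝ Vh) = fun x => ∫ u, F' x u ∂μ :=
    funext fun x => (hVhderiv x).fderiv
  have hVhcd : ContDiff ℝ 1 Vh := contDiff_one_iff_fderiv.2
    ⟨fun x => (hVhderiv x).differentiableAt, by rw [hVhfderiv]; exact hgcont⟩
  -- invariance
  have hinv : ∀ Λ ∈ G, ∀ x : E, Vh ((Λ : E ≃L[ℝ] E) x) = Vh x := by
    intro Λ hΛ x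
    have h₀mem : e.symm Λ ∈ H := by
      have : e (e.symm Λ) ∈ G := by rw [e.apply_symm_apply]; exact hΛ
      simpa [H, Subgroup.mem_comap] using this
    set h₀ : ↥H := ⟨e.symm Λ, h₀mem⟩ with hh₀
    have step : ∀ u : ↥H, j (h₀ * u) (Λ x) = j u x := by
      intro u
      show ((((h₀ * u : ↥H) : Aˣ)⁻¹ : Aˣ) : A) (Λ x) = j u x
      have hc : ((h₀ * u : ↥H) : Aˣ) = (h₀ : Aˣ) * (u : Aˣ) := rfl
      rw [hc, mul_inv_rev, Units.val_mul, ContinuousLinearMap.mul_apply]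
      congr 1
      have h1 : (((h₀ : Aˣ)⁻¹ : Aˣ) : A) (Λ x) = (e ((h₀ : Aˣ)⁻¹)) (Λ x) := rfl
      have h2 : e (h₀ : Aˣ) = Λ := e.apply_symm_apply Λ
      rw [h1, map_inv e, h2]
      exact Λ.symm_apply_apply x
    calc Vh (Λ x) = ∫ u, V (j (h₀ * u) (Λ x)) ∂μ :=
        (integral_mul_left_eq_self (μ := μ) (fun u => V (j u (Λ x))) h₀).symm
    _ = Vh x := by simp_rw [step]; rfl
  -- the inequality
  refine ⟨Vh, hVhcd, hinv, ?_⟩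
  intro x hxB
  have hgr : ∀ (W : E → ℝ) (y v : E), ⟪v, gradient W y⟫ = fderiv ℝ W y v := by
    intro W y v
    rw [real_inner_comm]
    exact InnerProductSpace.toDual_symm_apply
  have e1 : ⟪f x, gradient Vh x⟫ = ∫ u, F' x u (f x) ∂μ := by
    rw [hgr Vh x (f x), hVhfderiv]
    exact ContinuousLinearMap.integral_apply (key _ (hF'x x)) (f x)
  have hmemB : ∀ u : ↥H, j u x ∈ B := by
    intro u
    rw [hj u x, ← hB (gL u) (hgLmem u)]
    exact ⟨x, hxB, rfl⟩
  have e2 : ∀ u : ↥H, F' x u (f x) ≤ U - Φ x := by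
    intro u
    have h0 : F' x u (f x) = fderiv ℝ V (j u x) (j u (f x)) := rfl
    have h1 : j u (f x) = f (j u x) := by
      rw [hj u (f x), hj u x, ← hf (gL u) (hgLmem u) x hxB]
    have h3 : Φ (j u x) = Φ x := by rw [hj u x]; exact hΦ (gL u) (hgLmem u) x hxB
    have h2 := hineq (j u x) (hmemB u)
    rw [hgr V (j u x) (f (j u x))] at h2
    rw [h0, h1, h3] at *
    linarith [h2]
  have e3 : ∫ u, F' x u (f x) ∂μ ≤ U - Φ x := by
    have hci : Continuous fun u : ↥H => F' x u (f x) :=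
      isBoundedBilinearMap_apply.continuous.comp ((hF'x x).prodMk continuous_const)
    calc ∫ u, F' x u (f x) ∂μ ≤ ∫ _u, (U - Φ x) ∂μ :=
        integral_mono (key _ hci) (integrable_const _) e2
    _ = U - Φ x := by simp
  linarith [e1, e3]


/-- Symmetrization of auxiliary functions: let `G` be a compact subgroup of the group of
invertible linear maps on `ℝⁿ`, let `B` be `G`-invariant, `f` `G`-equivariant on `B`, and
`Φ` `G`-invariant on `B`. If a continuously differentiable `V` and a constant `U` satisfy
`U − Φ(x) − f(x)·∇V(x) ≥ 0` on `B`, then there is a continuously differentiable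
`G`-invariant `V̂` satisfying the same inequality on `B`. -/
theorem statement13 {n : ℕ}
    (G : Subgroup (EuclideanSpace ℝ (Fin n) ≃L[ℝ] EuclideanSpace ℝ (Fin n)))
    (hGcomp : IsCompact ((fun Λ : EuclideanSpace ℝ (Fin n) ≃L[ℝ] EuclideanSpace ℝ (Fin n) =>
      (Λ : EuclideanSpace ℝ (Fin n) →L[ℝ] EuclideanSpace ℝ (Fin n))) '' (G : Set _)))
    (B : Set (EuclideanSpace ℝ (Fin n)))
    (hB : ∀ Λ ∈ G, (Λ : EuclideanSpace ℝ (Fin n) ≃L[ℝ] EuclideanSpace ℝ (Fin n)) '' B = B)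
    (f : EuclideanSpace ℝ (Fin n) → EuclideanSpace ℝ (Fin n))
    (hf : ∀ Λ ∈ G, ∀ x ∈ B,
      f ((Λ : EuclideanSpace ℝ (Fin n) ≃L[ℝ] EuclideanSpace ℝ (Fin n)) x) = Λ (f x))
    (Φ : EuclideanSpace ℝ (Fin n) → ℝ)
    (hΦ : ∀ Λ ∈ G, ∀ x ∈ B,
      Φ ((Λ : EuclideanSpace ℝ (Fin n) ≃L[ℝ] EuclideanSpace ℝ (Fin n)) x) = Φ x)
    (V : EuclideanSpace ℝ (Fin n) → ℝ) (hV : ContDiff ℝ 1 V) (U : ℝ)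
    (hineq : ∀ x ∈ B, 0 ≤ U - Φ x - ⟪f x, gradient V x⟫) :
    ∃ Vh : EuclideanSpace ℝ (Fin n) → ℝ, ContDiff ℝ 1 Vh ∧
      (∀ Λ ∈ G, ∀ x : EuclideanSpace ℝ (Fin n),
        Vh ((Λ : EuclideanSpace ℝ (Fin n) ≃L[ℝ] EuclideanSpace ℝ (Fin n)) x) = Vh x) ∧
      ∀ x ∈ B, 0 ≤ U - Φ x - ⟪f x, gradient Vh x⟫ :=
  symmetrize_aux G hGcomp B hB f hf Φ hΦ V hV U hineq
end

section
/- Let G be a compact subgroup of the group of invertible linear maps on ℝⁿ, with Haar probability measure m. If σ ∈ ℝ[x₁,…,x_n] is an SOS polynomial, then the function σ̂(x) = ∫_G σ(Λx) dm(Λ) is again a polynomial in x, and it is SOS. -/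
open MvPolynomial MeasureTheory

/-- A polynomial is a sum of squares if it is a finite sum of squares of polynomials. -/
def IsSOS {σ : Type*} (p : MvPolynomial σ ℝ) : Prop :=
  ∃ (K : ℕ) (q : Fin K → MvPolynomial σ ℝ), p = ∑ k, q k ^ 2

noncomputable instance {n : ℕ} : MeasurableSpace (Matrix (Fin n) (Fin n) ℝ) :=
  inferInstanceAs (MeasurableSpace (Fin n → Fin n → ℝ))

instance {n : ℕ} : BorelSpace (Matrix (Fin n) (Fin n) ℝ) :=
  inferInstanceAs (BorelSpace (Fin n → Fin n → ℝ))

/-! ### Auxiliary lemmas -/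

lemma IsSOS.zero' {τ : Type*} : IsSOS (0 : MvPolynomial τ ℝ) :=
  ⟨0, ![], by simp⟩

lemma IsSOS.add' {τ : Type*} {a b : MvPolynomial τ ℝ} (ha : IsSOS a) (hb : IsSOS b) :
    IsSOS (a + b) := by
  obtain ⟨K₁, q₁, rfl⟩ := ha
  obtain ⟨K₂, q₂, rfl⟩ := hb
  refine ⟨K₁ + K₂, Fin.append q₁ q₂, ?_⟩
  rw [Fin.sum_univ_add]
  simp

lemma isSOS_finset_sum {τ α : Type*} (t : Finset α) (g : α → MvPolynomial τ ℝ)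
    (h : ∀ a ∈ t, IsSOS (g a)) : IsSOS (∑ a ∈ t, g a) :=
  Finset.sum_induction g IsSOS (fun _ _ ha hb => ha.add' hb) IsSOS.zero' h

lemma isSOS_fintype_sum {τ ι : Type*} [Fintype ι] (r : ι → MvPolynomial τ ℝ) :
    IsSOS (∑ k, (r k) ^ 2) :=
  ⟨Fintype.card ι, r ∘ (Fintype.equivFin ι).symm, by
    rw [show (∑ k : Fin (Fintype.card ι), (r ∘ (Fintype.equivFin ι).symm) k ^ 2)
      = ∑ k : Fin (Fintype.card ι), (fun i => r i ^ 2) ((Fintype.equivFin ι).symm k) from rfl,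
      Equiv.sum_comp (Fintype.equivFin ι).symm (fun i => r i ^ 2)]⟩

lemma aeval_real {ι : Type*} (f : ι → ℝ) (p : MvPolynomial ι ℝ) : aeval f p = eval f p := by
  rw [← coe_aeval_eq_eval]; rfl

/-- Integrability of continuous functions for a probability measure supported on a compact set. -/
lemma integrable_cont {n : ℕ} {K : Set (Matrix (Fin n) (Fin n) ℝ)} (hK : IsCompact K)
    (m : Measure (Matrix (Fin n) (Fin n) ℝ)) [IsProbabilityMeasure m] (hs : m K = 1)
    {f : Matrix (Fin n) (Fin n) ℝ → ℝ} (hf : Continuous f) : Integrable f m := by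
  obtain ⟨C, hC⟩ := hK.exists_bound_of_continuousOn hf.continuousOn
  refine Integrable.mono' (integrable_const C) hf.aestronglyMeasurable ?_
  have h0 : m Kᶜ = 0 := by
    rw [measure_compl hK.isClosed.measurableSet (measure_ne_top m K), hs, measure_univ]
    simp
  filter_upwards [measure_eq_zero_iff_ae_notMem.mp h0] with A hA
  exact hC A (by simpa using hA)

/-- The polynomial `q(Ax)` viewed as a polynomial in `x` with polynomial coefficients
in the entries of `A`. -/
noncomputable def substQ {n : ℕ} (q : MvPolynomial (Fin n) ℝ) :
    MvPolynomial (Fin n) (MvPolynomial (Fin n × Fin n) ℝ) :=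
  aeval (fun i => ∑ j, C (X (i, j)) * X j) q

theorem key_expand {n : ℕ} (q : MvPolynomial (Fin n) ℝ)
    (A : Matrix (Fin n) (Fin n) ℝ) (x : Fin n → ℝ) :
    eval (A.mulVec x) q = ∑ s ∈ (substQ q).support,
      (aeval (fun ij : Fin n × Fin n => A ij.1 ij.2) (coeff s (substQ q))) *
        (s.prod fun j e => x j ^ e) := by
  set F : MvPolynomial (Fin n) (MvPolynomial (Fin n × Fin n) ℝ) →ₐ[ℝ] ℝ :=
    aevalTower (aeval fun ij : Fin n × Fin n => A ij.1 ij.2) x with hF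
  have h1 : F (substQ q) = eval (A.mulVec x) q := by
    rw [substQ, ← AlgHom.comp_apply, comp_aeval]
    have : (fun i => F (∑ j, C (X (i, j)) * X j)) = A.mulVec x := by
      funext i
      simp [hF, Matrix.mulVec, dotProduct]
    rw [this, ← coe_aeval_eq_eval]
    rfl
  have h2 : F (substQ q) = ∑ s ∈ (substQ q).support,
      (aeval (fun ij : Fin n × Fin n => A ij.1 ij.2) (coeff s (substQ q))) *
        (s.prod fun j e => x j ^ e) := by
    conv_lhs => rw [as_sum (substQ q)]
    rw [map_sum]
    refine Finset.sum_congr rfl fun s _ => ?_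
    rw [monomial_eq, map_mul, aevalTower_C]
    congr 1
    rw [Finsupp.prod, Finsupp.prod, map_prod]
    exact Finset.prod_congr rfl fun j _ => by simp [hF]
  rw [← h1, h2]

/-- Averaging the square of a polynomial gives an SOS polynomial. -/
theorem avg_sq {n : ℕ} {K : Set (Matrix (Fin n) (Fin n) ℝ)} (hK : IsCompact K)
    (m : Measure (Matrix (Fin n) (Fin n) ℝ)) [IsProbabilityMeasure m] (hs : m K = 1)
    (q : MvPolynomial (Fin n) ℝ) :
    ∃ p : MvPolynomial (Fin n) ℝ, IsSOS p ∧
      ∀ x : Fin n → ℝ, (∫ A, (eval (A.mulVec x) q) ^ 2 ∂m) = eval x p := by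
  classical
  set S : Finset (Fin n →₀ ℕ) := (substQ q).support with hS
  set f : S → Matrix (Fin n) (Fin n) ℝ → ℝ :=
    fun s A => eval (fun ij : Fin n × Fin n => A ij.1 ij.2) (coeff s.1 (substQ q)) with hf
  have hfc : ∀ s : S, Continuous (f s) := fun s =>
    (MvPolynomial.continuous_eval _).comp
      (continuous_pi fun ij => (continuous_apply ij.2).comp (continuous_apply ij.1))
  set w : (Fin n →₀ ℕ) → (Fin n → ℝ) → ℝ := fun s x => s.prod fun j e => x j ^ e with hw
  have hexp : ∀ (A : Matrix (Fin n) (Fin n) ℝ) (x : Fin n → ℝ),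
      eval (A.mulVec x) q = ∑ s : S, f s A * w s.1 x := by
    intro A x
    rw [key_expand q A x, ← Finset.sum_coe_sort S]
    exact Finset.sum_congr rfl fun s _ => by rw [aeval_real]
  set M : Matrix S S ℝ := fun s t => ∫ A, f s A * f t A ∂m with hM
  have hMint : ∀ s t : S, Integrable (fun A => f s A * f t A) m :=
    fun s t => integrable_cont hK m hs ((hfc s).mul (hfc t))
  have hPSD : M.PosSemidef := by
    refine Matrix.PosSemidef.of_dotProduct_mulVec_nonneg ?_ ?_
    · ext s t
      simp only [Matrix.conjTranspose_apply, star_trivial, hM]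
      show (∫ A, f t A * f s A ∂m) = ∫ A, f s A * f t A ∂m
      refine congrArg (fun g : Matrix (Fin n) (Fin n) ℝ → ℝ => ∫ A, g A ∂m) ?_
      funext A
      ring
    · intro v
      have hv : dotProduct (star v) (M.mulVec v)
          = ∫ A, (∑ s : S, v s * f s A) ^ 2 ∂m := by
        have h1 : ∀ A : Matrix (Fin n) (Fin n) ℝ, (∑ s : S, v s * f s A) ^ 2
            = ∑ p : S × S, (v p.1 * v p.2) * (f p.1 A * f p.2 A) := by
          intro A
          rw [sq, Finset.sum_mul_sum, Fintype.sum_prod_type]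
          exact Finset.sum_congr rfl fun s _ => Finset.sum_congr rfl fun t _ => by ring
        simp_rw [h1]
        rw [integral_finset_sum _ fun p _ => (hMint p.1 p.2).const_mul _]
        simp_rw [integral_const_mul]
        rw [Fintype.sum_prod_type]
        simp only [dotProduct, Matrix.mulVec, star_trivial, hM]
        simp_rw [Finset.mul_sum]
        exact Finset.sum_congr rfl fun s _ => Finset.sum_congr rfl fun t _ => by ring
      rw [hv]
      exact integral_nonneg fun A => sq_nonneg _
  obtain ⟨B, hB⟩ : ∃ B : Matrix S S ℝ, M = B.conjTranspose * B := by
    open scoped MatrixOrder in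
    obtain ⟨X, hX, -, hXX⟩ := CFC.exists_sqrt_of_isSelfAdjoint_of_quasispectrumRestricts
      hPSD.isHermitian (QuasispectrumRestricts.nnreal_of_nonneg hPSD.nonneg)
    exact ⟨X, by rw [hM, ← hXX]; nth_rewrite 1 [← hX.star_eq]; rfl⟩
  have hMB : ∀ s t : S, M s t = ∑ k : S, B k s * B k t := by
    intro s t
    rw [hB]
    simp [Matrix.mul_apply, Matrix.conjTranspose_apply]
  refine ⟨∑ k : S, (∑ s : S, C (B k s) * monomial s.1 1) ^ 2, isSOS_fintype_sum _, ?_⟩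
  intro x
  have hevalp : eval x (∑ k : S, (∑ s : S, C (B k s) * monomial s.1 1) ^ 2)
      = ∑ k : S, (∑ s : S, B k s * w s.1 x) ^ 2 := by
    simp [eval_monomial, hw]
  rw [hevalp]
  have hRHS : ∑ k : S, (∑ s : S, B k s * w s.1 x) ^ 2
      = ∑ p : S × S, (w p.1.1 x * w p.2.1 x) * M p.1 p.2 := by
    have h1 : ∀ k : S, (∑ s : S, B k s * w s.1 x) ^ 2
        = ∑ p : S × S, (B k p.1 * w p.1.1 x) * (B k p.2 * w p.2.1 x) := by
      intro k
      rw [sq, Finset.sum_mul_sum, Fintype.sum_prod_type]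
    simp_rw [h1]
    rw [Finset.sum_comm]
    refine Finset.sum_congr rfl fun p _ => ?_
    rw [hMB p.1 p.2, Finset.mul_sum]
    exact Finset.sum_congr rfl fun k _ => by ring
  rw [hRHS]
  have h1 : ∀ A : Matrix (Fin n) (Fin n) ℝ, (eval (A.mulVec x) q) ^ 2
      = ∑ p : S × S, (w p.1.1 x * w p.2.1 x) * (f p.1 A * f p.2 A) := by
    intro A
    rw [hexp A x, sq, Finset.sum_mul_sum, Fintype.sum_prod_type]
    exact Finset.sum_congr rfl fun s _ => Finset.sum_congr rfl fun t _ => by ring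
  simp_rw [h1]
  rw [integral_finset_sum _ fun p _ => (hMint p.1 p.2).const_mul _]
  simp_rw [integral_const_mul]
  rfl

/-- Averaging an SOS polynomial over a compact subgroup `G` of `GL(n,ℝ)` with respect to its
Haar probability measure `m` yields a polynomial, which is again SOS:
`σ̂(x) = ∫_G σ(Λx) dm(Λ)` is a polynomial in `x` and is SOS. -/
theorem statement15 {n : ℕ}
    (G : Subgroup (Matrix.GeneralLinearGroup (Fin n) ℝ))
    (hGcomp : IsCompact ((fun Λ : Matrix.GeneralLinearGroup (Fin n) ℝ =>
      (Λ : Matrix (Fin n) (Fin n) ℝ)) '' (G : Set _)))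
    (m : Measure (Matrix (Fin n) (Fin n) ℝ))
    (hprob : IsProbabilityMeasure m)
    (hsupp : m ((fun Λ : Matrix.GeneralLinearGroup (Fin n) ℝ =>
      (Λ : Matrix (Fin n) (Fin n) ℝ)) '' (G : Set _)) = 1)
    (hleft : ∀ Λ ∈ G, MeasurePreserving
      (fun A : Matrix (Fin n) (Fin n) ℝ => (Λ : Matrix (Fin n) (Fin n) ℝ) * A) m m)
    (hright : ∀ Λ ∈ G, MeasurePreserving
      (fun A : Matrix (Fin n) (Fin n) ℝ => A * (Λ : Matrix (Fin n) (Fin n) ℝ)) m m)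
    (σ : MvPolynomial (Fin n) ℝ) (hσ : IsSOS σ) :
    ∃ p : MvPolynomial (Fin n) ℝ, IsSOS p ∧
      ∀ x : Fin n → ℝ, (∫ A, eval (A.mulVec x) σ ∂m) = eval x p := by
  classical
  obtain ⟨Kn, qf, rfl⟩ := hσ
  choose p hpSOS hpint using fun k : Fin Kn => avg_sq hGcomp m hsupp (qf k)
  refine ⟨∑ k, p k, isSOS_finset_sum _ _ fun k _ => hpSOS k, ?_⟩
  intro x
  have hcont : ∀ k : Fin Kn, Continuous fun A : Matrix (Fin n) (Fin n) ℝ =>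
      (eval (A.mulVec x) (qf k)) ^ 2 := by
    intro k
    have hmv : Continuous fun A : Matrix (Fin n) (Fin n) ℝ => A.mulVec x := by
      refine continuous_pi fun i => ?_
      simp only [Matrix.mulVec, dotProduct]
      exact continuous_finset_sum _ fun j _ =>
        ((continuous_apply_apply i j).mul continuous_const)
    exact ((MvPolynomial.continuous_eval _).comp hmv).pow 2
  have hev : ∀ A : Matrix (Fin n) (Fin n) ℝ,
      eval (A.mulVec x) (∑ k, qf k ^ 2) = ∑ k, (eval (A.mulVec x) (qf k)) ^ 2 := by
    intro A; simp
  simp_rw [hev]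
  rw [integral_finset_sum _ fun k _ => integrable_cont hGcomp m hsupp (hcont k)]
  simp_rw [hpint _ x]
  rw [map_sum]
end
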